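/- (Geometric lower bound, Proposition 3(a)) Let (M,g) be a compact Riemannian n-manifold with n ≥ 4, F ∈ ℱ_k, G ∈ 𝒢_k, and assume the scalar Hebey–Vaugon bound B₀(n,β,g) β(x) ≥ ((n−2)/(4(n−1))) A₀(n) S_g(x) holds for all positive continuous β and all x ∈ M. Then for every x ∈ M and every t₀ ∈ S^{k−1} with F(t₀) = M_F: ℬ₀(n,F,G,g) G(x,t₀) ≥ ((n−2)/(4(n−1))) 𝒜₀(n,F) S_g(x). -/

import Mathlib

open MeasureTheory

/-- Geometric lower bound (Proposition 3(a)): on a compact Riemannian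
`n`-manifold with `n ≥ 4`, assuming the scalar Hebey–Vaugon bound
`B₀(n,β,g) β(x) ≥ ((n-2)/(4(n-1))) A₀(n) S_g(x)` for all positive continuous
`β`, one has, for every `x` and every maximum point `t₀` of `F` on `S^{k-1}`,
`ℬ₀(n,F,G,g) G(x,t₀) ≥ ((n-2)/(4(n-1))) 𝒜₀(n,F) S_g(x)`, where
`𝒜₀(n,F) = M_F^{2/2*} A₀(n)`.  The manifold data are abstracted by the volume
measure `ν`, the Dirichlet energies `dirS`/`dir`, the Sobolev classes `S1`/`Sk`
(compatible under `u ↦ u • t₀`), the scalar curvature `Sg`, the scalar second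
best constant `B0 β` (characterized as the least valid constant) and the vector
second best constant `Bvec` (for which the saturated inequality is valid). -/
theorem stmt16 {M : Type*} [TopologicalSpace M] [CompactSpace M] [MeasurableSpace M] (ν : Measure M)
    (n k : ℕ) (hn : 4 ≤ n) (hk : 1 ≤ k)
    (p : ℝ) (hp : p = 2 * (n : ℝ) / ((n : ℝ) - 2))
    (A0 : ℝ) (hA0 : 0 < A0)
    (Sg : M → ℝ)
    (F : EuclideanSpace ℝ (Fin k) → ℝ)
    (hFcont : Continuous F)
    (hFpos : ∀ t, t ≠ 0 → 0 < F t)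
    (hFhom : ∀ (c : ℝ) (t), F (c • t) = |c| ^ p * F t)
    (MF : ℝ) (hMFpos : 0 < MF)
    (t₀ : EuclideanSpace ℝ (Fin k)) (ht₀ : ‖t₀‖ = 1)
    (hFt₀ : F t₀ = MF) (hMFmax : ∀ t : EuclideanSpace ℝ (Fin k), ‖t‖ = 1 → F t ≤ MF)
    (G : M → EuclideanSpace ℝ (Fin k) → ℝ)
    (hGhom : ∀ (x : M) (c : ℝ) (t), G x (c • t) = c ^ 2 * G x t)
    (hGcont : Continuous fun x : M => G x t₀)
    (hGpos : ∀ x : M, 0 < G x t₀)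
    (S1 : Set (M → ℝ)) (Sk : Set (M → EuclideanSpace ℝ (Fin k)))
    (dirS : (M → ℝ) → ℝ) (dir : (M → EuclideanSpace ℝ (Fin k)) → ℝ)
    (htest : ∀ u ∈ S1, (fun x => u x • t₀) ∈ Sk ∧ dir (fun x => u x • t₀) = dirS u)
    (B0 : (M → ℝ) → ℝ)
    (hB0_least : ∀ (β : M → ℝ) (B : ℝ),
      (∀ u ∈ S1, (∫ x, |u x| ^ p ∂ν) ^ (2 / p) ≤
        A0 * dirS u + B * ∫ x, β x * (u x) ^ 2 ∂ν) → B0 β ≤ B)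
    (hHV : ∀ β : M → ℝ, Continuous β → (∀ x, 0 < β x) → ∀ x : M,
      ((n : ℝ) - 2) / (4 * ((n : ℝ) - 1)) * A0 * Sg x ≤ B0 β * β x)
    (Bvec : ℝ)
    (hBvec_valid : ∀ U ∈ Sk, (∫ x, F (U x) ∂ν) ^ (2 / p) ≤
      MF ^ (2 / p) * A0 * dir U + Bvec * ∫ x, G x (U x) ∂ν) :
    ∀ x : M, ((n : ℝ) - 2) / (4 * ((n : ℝ) - 1)) * (MF ^ (2 / p) * A0) * Sg x ≤
      Bvec * G x t₀ := by

  intro x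
  have hMFc : (0:ℝ) < MF ^ (2 / p) := Real.rpow_pos_of_pos hMFpos _
  set c := MF ^ (2 / p) with hc
  have key : ∀ u ∈ S1, (∫ y, |u y| ^ p ∂ν) ^ (2 / p) ≤
      A0 * dirS u + (Bvec / c) * ∫ y, (G y t₀) * (u y) ^ 2 ∂ν := by
    intro u hu
    obtain ⟨hUk, hdir⟩ := htest u hu
    have h := hBvec_valid _ hUk
    have hF : (fun y => F (u y • t₀)) = fun y => |u y| ^ p * MF := by
      funext y; rw [hFhom, hFt₀]
    have hG : (fun y => G y (u y • t₀)) = fun y => (G y t₀) * (u y) ^ 2 := by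
      funext y; rw [hGhom]; ring
    simp only [hF, hG, hdir] at h
    have h1 : (∫ y, |u y| ^ p * MF ∂ν) = (∫ y, |u y| ^ p ∂ν) * MF :=
      integral_mul_const _ _
    have hInn : (0:ℝ) ≤ ∫ y, |u y| ^ p ∂ν :=
      integral_nonneg fun y => Real.rpow_nonneg (abs_nonneg _) _
    rw [h1, Real.mul_rpow hInn hMFpos.le] at h
    rw [← mul_le_mul_iff_of_pos_right hMFc]
    have h2 : (A0 * dirS u + Bvec / c * ∫ y, (G y t₀) * (u y) ^ 2 ∂ν) * c
        = c * A0 * dirS u + Bvec * ∫ y, (G y t₀) * (u y) ^ 2 ∂ν := by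
      field_simp
    rw [h2]
    exact h
  have hB0 : B0 (fun y => G y t₀) ≤ Bvec / c := hB0_least _ _ key
  have hlow := hHV (fun y => G y t₀) hGcont hGpos x
  have hGx := (hGpos x).le
  have hchain : ((n : ℝ) - 2) / (4 * ((n : ℝ) - 1)) * A0 * Sg x ≤ (Bvec / c) * G x t₀ :=
    hlow.trans (mul_le_mul_of_nonneg_right hB0 hGx)
  have := mul_le_mul_of_nonneg_left hchain hMFc.le
  calc ((n : ℝ) - 2) / (4 * ((n : ℝ) - 1)) * (c * A0) * Sg x
      = c * (((n : ℝ) - 2) / (4 * ((n : ℝ) - 1)) * A0 * Sg x) := by ring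
    _ ≤ c * ((Bvec / c) * G x t₀) := this
    _ = Bvec * G x t₀ := by field_simp
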